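/- arXiv:2512.10599 — 7 statements merged into one kernel-verified Lean document; each statement's English description precedes it below -/
import Mathlib

section
/- Let X be an uncountable set with the co-countable topology. Then X is well-filtered: for every filtered family {F_d : d ∈ D} of nonempty compact saturated sets and every open U with ⋂_{d∈D} F_d ⊆ U, there exists d ∈ D with F_d ⊆ U. -/
/-- The co-countable topology on a type: a set is open iff it is empty or has
countable complement. -/
def cocountableTopology (X : Type*) : TopologicalSpace X where
  IsOpen U := U = ∅ ∨ (Uᶜ : Set X).Countable
  isOpen_univ := Or.inr (by simp)
  isOpen_inter := by
    rintro s t (rfl | hs) ht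
    · simp
    rcases ht with rfl | ht
    · simp
    · right
      rw [Set.compl_inter]
      exact hs.union ht
  isOpen_sUnion := by
    intro S hS
    by_cases h : ∀ s ∈ S, s = ∅
    · left
      exact Set.sUnion_eq_empty.mpr h
    · push_neg at h
      obtain ⟨s, hsS, hs⟩ := h
      right
      rcases hS s hsS with rfl | hc
      · exact (Set.not_nonempty_empty hs).elim
      · exact hc.mono (Set.compl_subset_compl.mpr (Set.subset_sUnion_of_mem hsS))

/-- Type synonym for a type equipped with the co-countable topology. -/
def Cocountable (X : Type*) : Type _ := X

instance (X : Type*) : TopologicalSpace (Cocountable X) := cocountableTopology X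

instance (X : Type*) [Uncountable X] : Uncountable (Cocountable X) := ‹Uncountable X›

/-- A subset of a topological space is saturated if it equals the intersection of
the open sets containing it. -/
def IsSaturatedSet {Y : Type*} [TopologicalSpace Y] (A : Set Y) : Prop :=
  A = ⋂₀ {U : Set Y | IsOpen U ∧ A ⊆ U}

/-- In the co-countable topology, compact sets are finite. -/
lemma cocountable_compact_finite {X : Type*} {K : Set (Cocountable X)}
    (hK : IsCompact K) : K.Finite := by
  by_contra hinf
  rw [Set.not_infinite.symm, not_not] at hinf
  obtain ⟨f, hfK, hfinj⟩ :
      ∃ f : ℕ → Cocountable X, (∀ n, f n ∈ K) ∧ Function.Injective f := by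
    obtain g := hinf.natEmbedding
    exact ⟨fun n => (g n : Cocountable X), fun n => (g n).2,
      fun a b h => g.injective (Subtype.ext h)⟩
  set V : ℕ → Set (Cocountable X) := fun n => {y | ∃ m ≥ n, f m = y}ᶜ with hV
  have hVopen : ∀ n, IsOpen (V n) := by
    intro n
    refine Or.inr ?_
    show (({y : Cocountable X | ∃ m ≥ n, f m = y}ᶜ)ᶜ : Set (Cocountable X)).Countable
    rw [compl_compl]
    have : {y : Cocountable X | ∃ m ≥ n, f m = y} ⊆ Set.range f := by
      rintro y ⟨m, _, rfl⟩; exact ⟨m, rfl⟩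
    exact (Set.countable_range f).mono this
  have hcover : K ⊆ ⋃ n, V n := by
    intro y _
    by_contra hy
    simp only [Set.mem_iUnion, not_exists] at hy
    -- y is in every tail
    have h0 : ∃ m ≥ 0, f m = y := by
      have := hy 0
      simpa [hV, Set.mem_compl_iff] using this
    obtain ⟨m₀, _, hm₀⟩ := h0
    have h1 : ∃ m ≥ m₀ + 1, f m = y := by
      have := hy (m₀ + 1)
      simpa [hV, Set.mem_compl_iff] using this
    obtain ⟨m₁, hm₁ge, hm₁⟩ := h1
    have : m₀ = m₁ := hfinj (hm₀.trans hm₁.symm)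
    omega
  obtain ⟨s, hs⟩ := hK.elim_finite_subcover V hVopen hcover
  obtain ⟨N, hN⟩ : ∃ N, ∀ n ∈ s, n ≤ N := ⟨s.sup id, fun n hn => Finset.le_sup (f := id) hn⟩
  have hfN : f (N + 1) ∈ ⋃ n ∈ s, V n := hs (hfK (N + 1))
  simp only [Set.mem_iUnion] at hfN
  obtain ⟨n, hns, hfn⟩ := hfN
  exact hfn ⟨N + 1, by have := hN n hns; omega, rfl⟩

/-- An uncountable set with the co-countable topology is
well-filtered. -/
theorem cocountable_wellFiltered {X : Type*} [Uncountable X]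
    {D : Type*} [Nonempty D] (F : D → Set (Cocountable X))
    (hne : ∀ d, (F d).Nonempty) (hcpt : ∀ d, IsCompact (F d))
    (hsat : ∀ d, IsSaturatedSet (F d))
    (hfil : ∀ d₁ d₂ : D, ∃ d₃ : D, F d₃ ⊆ F d₁ ∩ F d₂)
    (U : Set (Cocountable X)) (hU : IsOpen U) (hsub : (⋂ d, F d) ⊆ U) :
    ∃ d, F d ⊆ U := by
  have hfin : ∀ d, (F d).Finite := fun d => cocountable_compact_finite (hcpt d)
  -- pick d₀ with minimal cardinality
  obtain ⟨d₀, hd₀⟩ : ∃ d₀, ∀ d, (F d₀).ncard ≤ (F d).ncard := by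
    obtain ⟨n, ⟨d₀, hd₀⟩, hmin⟩ :=
      Nat.lt_wfRel.wf.has_min (Set.range fun d => (F d).ncard) (Set.range_nonempty _)
    refine ⟨d₀, fun d => ?_⟩
    have h1 : ¬ (F d).ncard < n := hmin _ ⟨d, rfl⟩
    simp only at hd₀
    omega
  have hmin : ∀ d, F d₀ ⊆ F d := by
    intro d
    obtain ⟨d₃, hd₃⟩ := hfil d₀ d
    have hsub₀ : F d₃ ⊆ F d₀ := hd₃.trans Set.inter_subset_left
    have heq : F d₃ = F d₀ :=
      Set.eq_of_subset_of_ncard_le hsub₀ (hd₀ d₃) (hfin d₀)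
    rw [← heq]
    exact hd₃.trans Set.inter_subset_right
  exact ⟨d₀, fun x hx => hsub (Set.mem_iInter.mpr fun d => hmin d hx)⟩
end

section
/- For a poset P, the space (P, υ(P)) with the upper topology is sober if and only if every irreducible subset of (P, υ(P)) has a supremum in P. -/
open Topology

/-- A nonempty subset of a topological space is irreducible if whenever it is
covered by a union of two closed sets, it is contained in one of them. -/
def IrredSet {Y : Type*} [TopologicalSpace Y] (A : Set Y) : Prop :=
  A.Nonempty ∧ ∀ F₁ F₂ : Set Y, IsClosed F₁ → IsClosed F₂ → A ⊆ F₁ ∪ F₂ →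
    A ⊆ F₁ ∨ A ⊆ F₂

lemma irredSet_iff_isIrreducible {Y : Type*} [TopologicalSpace Y] (A : Set Y) :
    IrredSet A ↔ IsIrreducible A := by
  unfold IrredSet IsIrreducible
  rw [isPreirreducible_iff_isClosed_union_isClosed]

/-- `(P, υ(P))` is sober iff every irreducible subset of
`(P, υ(P))` has a supremum in `P`. -/
theorem upper_sober_iff_irreducible_complete {P : Type*} [PartialOrder P] :
    (∀ A : Set (WithUpper P), IrredSet A → IsClosed A → ∃! x, A = closure {x}) ↔
      (∀ A : Set (WithUpper P), IrredSet A → ∃ s, IsLUB A s) := by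
  constructor
  · intro hsob A hA
    have hAI : IsIrreducible A := (irredSet_iff_isIrreducible A).1 hA
    have hB : IsIrreducible (closure A) := hAI.closure
    obtain ⟨x, hx, -⟩ := hsob (closure A) ((irredSet_iff_isIrreducible _).2 hB) isClosed_closure
    rw [Topology.IsUpper.closure_singleton] at hx
    refine ⟨x, fun a ha => ?_, fun b hb => ?_⟩
    · have : a ∈ closure A := subset_closure ha
      rw [hx] at this; exact this
    · have hsub : closure A ⊆ Set.Iic b := closure_minimal hb isClosed_Iic
      have : x ∈ closure A := by rw [hx]; exact le_refl x
      exact hsub this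
  · intro hlub A hA hAcl
    obtain ⟨s, hs⟩ := hlub A hA
    have hAI : IsIrreducible A := (irredSet_iff_isIrreducible A).1 hA
    classical
    have hsA : s ∈ A := by
      by_contra hnot
      obtain ⟨v, ⟨t, htf, rfl⟩, hsv, hvA⟩ :=
        Topology.IsUpper.isTopologicalBasis.exists_subset_of_mem_open
          (show s ∈ Aᶜ from hnot) hAcl.isOpen_compl
      -- A ⊆ lowerClosure t
      have hAt : A ⊆ (lowerClosure t : Set (WithUpper P)) := by
        intro a ha
        by_contra h
        exact hvA h ha
      -- finite union of Iic's
      have := (isIrreducible_iff_sUnion_isClosed.1 hAI)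
        (htf.toFinset.image Set.Iic)
        (by
          intro z hz
          simp only [Finset.mem_image] at hz
          obtain ⟨a, -, rfl⟩ := hz
          exact isClosed_Iic)
        (by
          intro a ha
          obtain ⟨b, hbt, hab⟩ := hAt ha
          refine ⟨Set.Iic b, ?_, hab⟩
          simp only [Finset.coe_image, Set.mem_image, Finset.mem_coe, Set.Finite.mem_toFinset]
          exact ⟨b, hbt, rfl⟩)
      obtain ⟨z, hz, hAz⟩ := this
      simp only [Finset.mem_image, Set.Finite.mem_toFinset] at hz
      obtain ⟨b, hbt, rfl⟩ := hz
      have hsb : s ≤ b := hs.2 (fun a ha => hAz ha)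
      exact hsv ⟨b, hbt, hsb⟩
    have hAeq : A = closure ({s} : Set (WithUpper P)) := by
      rw [Topology.IsUpper.closure_singleton]
      apply Set.Subset.antisymm
      · exact fun a ha => hs.1 ha
      · have : closure ({s} : Set (WithUpper P)) ⊆ A :=
          closure_minimal (Set.singleton_subset_iff.2 hsA) hAcl
        rwa [Topology.IsUpper.closure_singleton] at this
    refine ⟨s, hAeq, fun y hy => ?_⟩
    have : Set.Iic y = Set.Iic s := by
      rw [← Topology.IsUpper.closure_singleton, ← Topology.IsUpper.closure_singleton, ← hy, ← hAeq]
    have h1 : y ≤ s := by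
      have : y ∈ Set.Iic s := this ▸ Set.mem_Iic.2 (le_refl y)
      exact this
    have h2 : s ≤ y := by
      have : s ∈ Set.Iic y := this.symm ▸ Set.mem_Iic.2 (le_refl s)
      exact this
    exact le_antisymm (α := P) h1 h2
end

section
/- For a sup-complete poset P (in particular, for a complete lattice), the space (P, υ(P)) with the upper topology is sober. -/
open Topology

/-- For a sup-complete poset `P`, the space `(P, υ(P))` is sober. -/
theorem upper_sober_of_supComplete {P : Type*} [PartialOrder P]
    (hsup : ∀ A : Set P, A.Nonempty → ∃ s, IsLUB A s) :
    ∀ A : Set (WithUpper P), IrredSet A → IsClosed A → ∃! x, A = closure {x} := by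
  intro A hIrr hAcl
  obtain ⟨hne, hsplit⟩ := hIrr
  -- convert to mathlib's irreducibility
  have hirr : IsIrreducible A := by
    refine ⟨hne, isPreirreducible_iff_isClosed_union_isClosed.2 ?_⟩
    exact fun F₁ F₂ h1 h2 h12 => hsplit F₁ F₂ h1 h2 h12
  -- the supremum of A
  have hsup' : ∀ B : Set (WithUpper P), B.Nonempty → ∃ x : WithUpper P, IsLUB B x := hsup
  obtain ⟨s, hs⟩ := hsup' A hne
  classical
  have hsA : s ∈ A := by
    by_contra hsA
    have hopen : IsOpen Aᶜ := hAcl.isOpen_compl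
    have hsAc : s ∈ (Aᶜ : Set (WithUpper P)) := hsA
    obtain ⟨b, hb, hsb, hbA⟩ :=
      Topology.IsUpper.isTopologicalBasis.exists_subset_of_mem_open hsAc hopen
    obtain ⟨t, htfin, rfl⟩ := hb
    have hcov : A ⊆ ⋃ a ∈ t, Set.Iic a := by
      intro x hx
      have : x ∈ (lowerClosure t : Set (WithUpper P)) := by
        by_contra hxc
        exact hbA hxc hx
      obtain ⟨a, hat, hxa⟩ := this
      exact Set.mem_iUnion₂.2 ⟨a, hat, hxa⟩
    -- finite cover by closed sets
    obtain ⟨z, hz, hAz⟩ := isIrreducible_iff_sUnion_isClosed.1 hirr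
      (htfin.toFinset.image Set.Iic)
      (by
        intro z hz
        simp only [Finset.mem_image, Set.Finite.mem_toFinset] at hz
        obtain ⟨a, _, rfl⟩ := hz
        exact isClosed_Iic)
      (by
        intro x hx
        obtain ⟨a, hat, hxa⟩ := Set.mem_iUnion₂.1 (hcov hx)
        exact ⟨Set.Iic a, by simp [Finset.mem_image]; exact ⟨a, hat, rfl⟩, hxa⟩)
    simp only [Finset.mem_image, Set.Finite.mem_toFinset] at hz
    obtain ⟨a, hat, rfl⟩ := hz
    have hsa : s ≤ a := hs.2 (fun x hx => hAz hx)
    exact hsb (by exact ⟨a, hat, hsa⟩ : s ∈ (lowerClosure t : Set (WithUpper P)))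
  have hAeq : A = Set.Iic s := by
    apply Set.Subset.antisymm
    · exact fun x hx => hs.1 hx
    · intro x hx
      exact Topology.IsUpper.isLowerSet_of_isClosed hAcl hx hsA
  refine ⟨s, ?_, ?_⟩
  · show A = closure {s}
    rw [Topology.IsUpper.closure_singleton]; exact hAeq
  · intro y hy
    rw [Topology.IsUpper.closure_singleton] at hy
    rw [hAeq] at hy
    have h1 : s ≤ y := by
      have : s ∈ Set.Iic y := by rw [← hy]; exact Set.mem_Iic.2 le_rfl
      exact this
    have h2 : y ≤ s := by
      have : y ∈ Set.Iic s := by rw [hy]; exact Set.mem_Iic.2 le_rfl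
      exact this
    exact le_antisymm (α := P) h2 h1
end

section
/- For a sup-complete poset P, the space (P, υ(P)) with the upper topology is a strong R-space: for every nonempty family {K_i : i ∈ I} of nonempty compact saturated subsets of (P, υ(P)) and every open set U, ⋂_{i∈I} K_i ⊆ U implies ⋂_{i∈I₀} K_i ⊆ U for some finite I₀ ⊆ I. -/
open Topology

/-- For a sup-complete poset `P`, the space `(P, υ(P))` is a strong
R-space. -/
theorem upper_strongRSpace_of_supComplete {P : Type*} [PartialOrder P]
    (hsup : ∀ A : Set P, A.Nonempty → ∃ s, IsLUB A s)
    {ι : Type*} [Nonempty ι] (K : ι → Set (WithUpper P))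
    (hne : ∀ i, (K i).Nonempty) (hcpt : ∀ i, IsCompact (K i))
    (hsat : ∀ i, IsSaturatedSet (K i))
    (U : Set (WithUpper P)) (hU : IsOpen U) (hsub : (⋂ i, K i) ⊆ U) :
    ∃ I₀ : Finset ι, I₀.Nonempty ∧ (⋂ i ∈ I₀, K i) ⊆ U := by
  classical
  obtain ⟨i₀⟩ := ‹Nonempty ι›
  by_contra hcon
  push_neg at hcon
  haveI : Nonempty (WithUpper P) := ⟨(hne i₀).choose⟩
  -- transfer sup-completeness to `WithUpper P`
  have hsupX : ∀ A : Set (WithUpper P), A.Nonempty → ∃ s : WithUpper P, IsLUB A s := hsup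
  -- open sets are upper sets
  have hUup : IsUpperSet U := Topology.IsUpper.isUpperSet_of_isOpen hU
  -- every `K i` is an upper set
  have hKup : ∀ i, IsUpperSet (K i) := by
    intro i x y hxy hx
    rw [hsat i]
    rintro V ⟨hVopen, hVsub⟩
    exact Topology.IsUpper.isUpperSet_of_isOpen hVopen hxy (hVsub hx)
  -- basic neighbourhoods in the upper topology
  have hbasic : ∀ V : Set (WithUpper P), IsOpen V → ∀ x ∈ V, ∃ T : Finset (WithUpper P),
      (∀ t ∈ T, ¬ x ≤ t) ∧ ∀ y, y ∉ V → ∃ t ∈ T, y ≤ t := by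
    intro V hV x hx
    obtain ⟨b, hb, hxb, hbV⟩ :=
      Topology.IsUpper.isTopologicalBasis.exists_subset_of_mem_open hx hV
    obtain ⟨t, htf, rfl⟩ := hb
    refine ⟨htf.toFinset, ?_, ?_⟩
    · intro s hs hle
      exact hxb (mem_lowerClosure.2 ⟨s, htf.mem_toFinset.mp hs, hle⟩)
    · intro y hy
      by_contra hnot
      push_neg at hnot
      refine hy (hbV ?_)
      intro hmem
      obtain ⟨a, ha, hya⟩ := mem_lowerClosure.1 hmem
      exact hnot a (htf.mem_toFinset.mpr ha) hya
  -- finite intersections of the `K i`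
  set Q : Finset ι → Set (WithUpper P) := fun F => ⋂ i ∈ F, K i with hQdef
  have hQmem : ∀ {F : Finset ι} {x}, x ∈ Q F ↔ ∀ i ∈ F, x ∈ K i := by
    intro F x; simp [hQdef]
  -- finite intersections of the `K i` are compact
  have hQcpt : ∀ F : Finset ι, F.Nonempty → IsCompact (Q F) := by
    intro F hF
    rw [isCompact_iff_ultrafilter_le_nhds]
    intro f hf
    have hx : ∀ i ∈ F, ∃ x ∈ K i, ↑f ≤ 𝓝 x := by
      intro i hi
      refine (hcpt i).ultrafilter_le_nhds f (le_trans hf (Filter.principal_mono.2 ?_))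
      intro x hx
      exact hQmem.1 hx i hi
    choose! x hxK hxf using hx
    have hAne : (↑(F.image x) : Set (WithUpper P)).Nonempty :=
      Finset.coe_nonempty.2 (hF.image x)
    obtain ⟨s, hs⟩ := hsupX (↑(F.image x) : Set (WithUpper P)) hAne
    refine ⟨s, hQmem.2 fun i hi =>
      hKup i (hs.1 (Finset.mem_coe.2 (Finset.mem_image_of_mem x hi))) (hxK i hi), ?_⟩
    rw [le_nhds_iff]
    intro V hsV hVopen
    obtain ⟨T, hT1, hT2⟩ := hbasic V hVopen s hsV
    have key : ∀ t ∈ T, (Set.Iic t)ᶜ ∈ f := by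
      intro t ht
      have hex : ∃ i ∈ F, ¬ x i ≤ t := by
        by_contra hno
        push_neg at hno
        refine hT1 t ht (hs.2 ?_)
        intro y hy
        obtain ⟨i, hi, rfl⟩ := Finset.mem_image.1 (Finset.mem_coe.1 hy)
        exact hno i hi
      obtain ⟨i, hi, hit⟩ := hex
      exact hxf i hi ((isOpen_compl_iff.2 isClosed_Iic).mem_nhds hit)
    have hsub2 : (⋂ t ∈ T, (Set.Iic t)ᶜ) ⊆ V := by
      intro y hy
      by_contra hyV
      obtain ⟨t, ht, hyt⟩ := hT2 y hyV
      exact (Set.mem_iInter₂.1 hy t ht) hyt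
    exact Filter.mem_of_superset ((Filter.biInter_finset_mem T).2 key) hsub2
  -- the key predicate
  set Pred : WithUpper P → Prop :=
    fun a => ∀ F : Finset ι, F.Nonempty → (Set.Iic a ∩ (Q F ∩ Uᶜ)).Nonempty with hPreddef
  have hwit : ∀ F : Finset ι, F.Nonempty → (Q F ∩ Uᶜ).Nonempty := by
    intro F hF
    obtain ⟨y, hyQ, hyU⟩ := Set.not_subset.1 (hcon F hF)
    exact ⟨y, hyQ, hyU⟩
  -- a top element satisfies the predicate
  obtain ⟨tp, htp⟩ := hsupX Set.univ ⟨(hne i₀).choose, Set.mem_univ _⟩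
  have hPtop : Pred tp := by
    intro F hF
    obtain ⟨y, hy⟩ := hwit F hF
    exact ⟨y, htp.1 (Set.mem_univ y), hy⟩
  -- chain condition for Zorn
  have key : ∀ c : Set (WithUpper P), (∀ a ∈ c, Pred a) → IsChain (· ≤ ·) c →
      c.Nonempty → ∃ lb, Pred lb ∧ ∀ z ∈ c, lb ≤ z := by
    intro c hcPred hchain hcne
    obtain ⟨a₀, ha₀⟩ := hcne
    have hNe : Nonempty c := ⟨⟨a₀, ha₀⟩⟩
    have hLB : ∀ F : Finset ι, F.Nonempty →
        ∃ w, w ∈ Q F ∩ Uᶜ ∧ ∀ a ∈ c, w ≤ a := by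
      intro F hF
      set t : c → Set (WithUpper P) := fun a => Set.Iic a.1 ∩ Uᶜ with htdef
      have htc : ∀ a : c, IsClosed (t a) :=
        fun a => isClosed_Iic.inter (isClosed_compl_iff.2 hU)
      have hdt : Directed (· ⊇ ·) t := by
        rintro ⟨a, ha⟩ ⟨b, hb⟩
        rcases eq_or_ne a b with rfl | hab
        · exact ⟨⟨a, ha⟩, subset_rfl, subset_rfl⟩
        · rcases hchain ha hb hab with h | h
          · exact ⟨⟨a, ha⟩, subset_rfl, fun y hy => ⟨hy.1.trans h, hy.2⟩⟩
          · exact ⟨⟨b, hb⟩, fun y hy => ⟨hy.1.trans h, hy.2⟩, subset_rfl⟩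
      by_contra hno
      push_neg at hno
      have hempty : Q F ∩ ⋂ a : c, t a = ∅ := by
        rw [Set.eq_empty_iff_forall_notMem]
        rintro y ⟨hyQ, hyI⟩
        have hyU : y ∈ Uᶜ := (Set.mem_iInter.1 hyI ⟨a₀, ha₀⟩).2
        obtain ⟨a, ha, hay⟩ := hno y ⟨hyQ, hyU⟩
        exact hay (Set.mem_iInter.1 hyI ⟨a, ha⟩).1
      obtain ⟨⟨a, ha⟩, hae⟩ :=
        (hQcpt F hF).elim_directed_family_closed t htc hempty hdt
      obtain ⟨y, hy1, hy2, hy3⟩ := hcPred a ha F hF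
      exact Set.eq_empty_iff_forall_notMem.1 hae y ⟨hy2, hy1, hy3⟩
    obtain ⟨w₀, hw₀⟩ := hLB {i₀} (Finset.singleton_nonempty i₀)
    obtain ⟨m, hm⟩ := hsupX {x : WithUpper P | ∀ a ∈ c, x ≤ a} ⟨w₀, hw₀.2⟩
    have hmlb : ∀ a ∈ c, m ≤ a := fun a ha => hm.2 fun x hx => hx a ha
    refine ⟨m, ?_, hmlb⟩
    intro F hF
    obtain ⟨w, hw1, hw2⟩ := hLB F hF
    exact ⟨w, hm.1 hw2, hw1⟩
  -- Zorn's lemma in the dual order: a minimal element satisfying `Pred`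
  obtain ⟨m, -, hmS, hmax⟩ := zorn_le_nonempty₀ (α := (WithUpper P)ᵒᵈ)
    {b : (WithUpper P)ᵒᵈ | Pred (OrderDual.ofDual b)}
    (by
      intro c hcS hchain y hy
      obtain ⟨lb, hlbP, hlb⟩ := key {x : WithUpper P | OrderDual.toDual x ∈ c}
        (fun a ha => hcS ha)
        (by
          intro x hx y hy hxy
          rcases hchain hx hy (fun h => hxy (congrArg OrderDual.ofDual h)) with h | h
          · exact Or.inr h
          · exact Or.inl h)
        ⟨OrderDual.ofDual y, hy⟩
      exact ⟨OrderDual.toDual lb, hlbP, fun z hz => hlb (OrderDual.ofDual z) hz⟩)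
    (OrderDual.toDual tp) hPtop
  set a : WithUpper P := OrderDual.ofDual m with hadef
  have haPred : Pred a := hmS
  -- the minimal element belongs to all `K i`, hence to `U`
  have haK : ∀ i, a ∈ K i := by
    intro i
    obtain ⟨y, hy1, hy2, -⟩ := haPred {i} (Finset.singleton_nonempty i)
    exact hKup i hy1 (hQmem.1 hy2 i (Finset.mem_singleton_self i))
  have haU : a ∈ U := hsub (Set.mem_iInter.2 haK)
  obtain ⟨T, hT1, hT2⟩ := hbasic U hU a haU
  -- pigeonhole: some `t ∈ T` captures witnesses for all `F`
  have hgood : ∃ t ∈ T, ∀ F : Finset ι, F.Nonempty →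
      ((Set.Iic a ∩ Set.Iic t) ∩ (Q F ∩ Uᶜ)).Nonempty := by
    by_contra hno
    push_neg at hno
    choose! Ft hFt1 hFt2 using hno
    obtain ⟨y, hya, hyQ, hyU⟩ :=
      haPred (insert i₀ (T.biUnion Ft)) (Finset.insert_nonempty _ _)
    obtain ⟨t, ht, hyt⟩ := hT2 y hyU
    refine Set.eq_empty_iff_forall_notMem.1 (hFt2 t ht) y ⟨⟨hya, hyt⟩, ?_, hyU⟩
    refine hQmem.2 fun i hi => hQmem.1 hyQ i ?_
    exact Finset.mem_insert_of_mem (Finset.mem_biUnion.2 ⟨t, ht, hi⟩)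
  obtain ⟨t, htT, hper⟩ := hgood
  -- the sup of `↓a ∩ ↓t` contradicts minimality
  obtain ⟨y₀, hy₀, -⟩ := hper {i₀} (Finset.singleton_nonempty i₀)
  obtain ⟨c₀, hc₀⟩ := hsupX (Set.Iic a ∩ Set.Iic t) ⟨y₀, hy₀⟩
  have hc₀a : c₀ ≤ a := hc₀.2 fun x hx => hx.1
  have hc₀t : c₀ ≤ t := hc₀.2 fun x hx => hx.2
  have hc₀P : Pred c₀ := by
    intro F hF
    obtain ⟨y, hy1, hy2⟩ := hper F hF
    exact ⟨y, hc₀.1 hy1, hy2⟩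
  have hle : a ≤ c₀ := hmax (show Pred c₀ from hc₀P) (show c₀ ≤ a from hc₀a)
  exact hT1 t htT (hle.trans hc₀t)
end

section
/- For a sup-complete poset P, the space (P, υ(P)) with the upper topology is coherent: the intersection of any two compact saturated subsets is compact. -/
open Topology

private lemma isUpperSet_of_sat {P : Type*} [PartialOrder P] {K : Set (WithUpper P)}
    (h : IsSaturatedSet K) : IsUpperSet K := by
  rw [h]
  exact isUpperSet_sInter fun U hU => Topology.IsUpper.isUpperSet_of_isOpen hU.1

private lemma mem_ultrafilter_of_genOpen {P : Type*} [PartialOrder P]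
    {f : Ultrafilter (WithUpper P)} {a b q : WithUpper P}
    (hq : IsLUB {a, b} q) (hfa : ↑f ≤ nhds a) (hfb : ↑f ≤ nhds b)
    {U : Set (WithUpper P)}
    (hU : TopologicalSpace.GenerateOpen { t | ∃ x, (Set.Iic x)ᶜ = t } U) :
    q ∈ U → U ∈ f := by
  induction hU with
  | basic t ht =>
    obtain ⟨x, rfl⟩ := ht
    intro hqU
    have hax : ¬ a ≤ x ∨ ¬ b ≤ x := by
      by_contra hc
      push_neg at hc
      exact hqU (hq.2 (fun y hy => by
        rcases hy with rfl | hy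
        · exact hc.1
        · simp only [Set.mem_singleton_iff] at hy; subst hy; exact hc.2))
    have hopen : IsOpen ((Set.Iic x)ᶜ : Set (WithUpper P)) :=
      isOpen_compl_iff.2 isClosed_Iic
    rcases hax with h | h
    · exact hfa (hopen.mem_nhds h)
    · exact hfb (hopen.mem_nhds h)
  | univ => exact fun _ => Filter.univ_mem
  | inter s t _ _ ihs iht =>
    exact fun hx => Filter.inter_mem (ihs hx.1) (iht hx.2)
  | sUnion S _ ih =>
    rintro ⟨t, htS, hqt⟩
    exact Filter.mem_of_superset (ih t htS hqt) (Set.subset_sUnion_of_mem htS)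

/-- For a sup-complete poset `P`, the space `(P, υ(P))` is coherent. -/
theorem upper_coherent_of_supComplete {P : Type*} [PartialOrder P]
    (hsup : ∀ A : Set P, A.Nonempty → ∃ s, IsLUB A s)
    (K₁ K₂ : Set (WithUpper P))
    (h₁ : IsCompact K₁) (hs₁ : IsSaturatedSet K₁)
    (h₂ : IsCompact K₂) (hs₂ : IsSaturatedSet K₂) :
    IsCompact (K₁ ∩ K₂) := by
  rw [isCompact_iff_ultrafilter_le_nhds] at h₁ h₂ ⊢
  intro f hf
  obtain ⟨a, haK, hfa⟩ := h₁ f (hf.trans (Filter.principal_mono.2 Set.inter_subset_left))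
  obtain ⟨b, hbK, hfb⟩ := h₂ f (hf.trans (Filter.principal_mono.2 Set.inter_subset_right))
  obtain ⟨q, hq⟩ := hsup {WithUpper.ofUpper a, WithUpper.ofUpper b} ⟨_, Set.mem_insert _ _⟩
  have haq : a ≤ WithUpper.toUpper q := hq.1 (Set.mem_insert _ _)
  have hbq : b ≤ WithUpper.toUpper q := hq.1 (Set.mem_insert_of_mem _ rfl)
  refine ⟨WithUpper.toUpper q,
    ⟨isUpperSet_of_sat hs₁ haq haK, isUpperSet_of_sat hs₂ hbq hbK⟩, ?_⟩
  rw [le_nhds_iff]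
  intro U hqU hUopen
  have hgen : TopologicalSpace.GenerateOpen { t | ∃ x, (Set.Iic x)ᶜ = t } U :=
    (Topology.IsUpper.isOpen_iff_generate_Iic_compl).1 hUopen
  exact mem_ultrafilter_of_genOpen (a := a) (b := b) hq hfa hfb hgen hqU
end

section
/- For a sup-complete poset P, the space (P, υ(P)) with the upper topology is strongly well-filtered: for every filtered family {K_d : d ∈ D} of nonempty compact saturated sets, every nonempty compact saturated K, and every open U, ⋂_{d∈D} K_d ∩ K ⊆ U implies K_d ∩ K ⊆ U for some d ∈ D. -/
open Topology

section Aux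

open Set Filter WithUpper

variable {P : Type*} [PartialOrder P]

/-- sup-completeness transfers to `WithUpper P`. -/
lemma auxExistsLUB (hsup : ∀ A : Set P, A.Nonempty → ∃ s, IsLUB A s)
    (A : Set (WithUpper P)) (hA : A.Nonempty) : ∃ s : WithUpper P, IsLUB A s := by
  obtain ⟨x, hx⟩ := hA
  obtain ⟨s, hs⟩ := hsup (toUpper ⁻¹' A) ⟨ofUpper x, hx⟩
  exact ⟨toUpper s, hs⟩

/-- Saturated sets are upper sets. -/
lemma auxUpperOfSat {A : Set (WithUpper P)} (h : IsSaturatedSet A) : IsUpperSet A := by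
  have h' : A = ⋂₀ {U : Set (WithUpper P) | IsOpen U ∧ A ⊆ U} := h
  rw [h']
  exact isUpperSet_sInter fun U hU => Topology.IsUpper.isUpperSet_of_isOpen hU.1

/-- If an ultrafilter converges to `q` and to `k`, it converges to their join. -/
lemma auxLeNhdsSup {F : Ultrafilter (WithUpper P)} {q k z : WithUpper P}
    (hz : IsLUB {q, k} z) (hq : ↑F ≤ 𝓝 q) (hk : ↑F ≤ 𝓝 k) : ↑F ≤ 𝓝 z := by
  intro s hs
  rw [mem_nhds_iff] at hs
  obtain ⟨o, hos, ho, hzo⟩ := hs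
  obtain ⟨b, ⟨t, htf, rfl⟩, hzb, hbo⟩ :=
    Topology.IsUpper.isTopologicalBasis.exists_subset_of_mem_open hzo ho
  refine Filter.mem_of_superset ?_ (hbo.trans hos)
  have hb : ((lowerClosure t : Set (WithUpper P))ᶜ) = ⋂ a ∈ t, (Iic a)ᶜ := by
    rw [coe_lowerClosure, Set.compl_iUnion]
    simp
  rw [hb]
  refine (Filter.biInter_mem htf).2 fun a hat => ?_
  have hza : ¬ z ≤ a := by
    intro hle
    exact hzb (by rw [SetLike.mem_coe, mem_lowerClosure]; exact ⟨a, hat, hle⟩)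
  have : ¬ q ≤ a ∨ ¬ k ≤ a := by
    by_contra hcon
    push_neg at hcon
    exact hza (hz.2 (by rintro w (rfl | rfl); exacts [hcon.1, hcon.2]))
  have hopen : IsOpen ((Iic a)ᶜ : Set (WithUpper P)) := isClosed_Iic.isOpen_compl
  rcases this with h | h
  · exact hq (hopen.mem_nhds h)
  · exact hk (hopen.mem_nhds h)

/-- The intersection of two compact upper sets is compact. -/
lemma auxCompactInter (hsup : ∀ A : Set P, A.Nonempty → ∃ s, IsLUB A s)
    {Q K : Set (WithUpper P)} (hQ : IsCompact Q) (hK : IsCompact K)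
    (hQu : IsUpperSet Q) (hKu : IsUpperSet K) : IsCompact (Q ∩ K) := by
  apply isCompact_iff_ultrafilter_le_nhds.mpr
  intro F hF
  obtain ⟨q, hqQ, hq⟩ := hQ.ultrafilter_le_nhds F
    (hF.trans (Filter.principal_mono.2 inter_subset_left))
  obtain ⟨k, hkK, hk⟩ := hK.ultrafilter_le_nhds F
    (hF.trans (Filter.principal_mono.2 inter_subset_right))
  obtain ⟨z, hz⟩ := auxExistsLUB hsup {q, k} ⟨q, by simp⟩
  refine ⟨z, ⟨hQu (hz.1 (by simp)) hqQ, hKu (hz.1 (by simp)) hkK⟩, auxLeNhdsSup hz hq hk⟩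

/-- An irreducible set covered by a finite union of principal ideals is inside one. -/
lemma auxIrredSubsetIic {A : Set (WithUpper P)} (hA : IrredSet A) :
    ∀ t : Set (WithUpper P), t.Finite → A ⊆ ⋃ a ∈ t, Iic a → ∃ a ∈ t, A ⊆ Iic a := by
  intro t ht
  refine Set.Finite.induction_on (motive := fun t _ => A ⊆ ⋃ a ∈ t, Iic a → ∃ a ∈ t, A ⊆ Iic a) t ht ?_ ?_
  · intro h
    obtain ⟨x, hx⟩ := hA.1
    simpa using h hx
  · intro a u hau huf ih h
    rw [Set.biUnion_insert] at h
    have hclosed : IsClosed (⋃ b ∈ u, (Iic b : Set (WithUpper P))) :=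
      huf.isClosed_biUnion fun b _ => isClosed_Iic
    rcases hA.2 _ _ isClosed_Iic hclosed h with h1 | h2
    · exact ⟨a, Set.mem_insert _ _, h1⟩
    · obtain ⟨b, hbu, hb⟩ := ih h2
      exact ⟨b, Set.mem_insert_of_mem _ hbu, hb⟩

/-- The supremum of an irreducible set lies in its closure. -/
lemma auxLubMemClosure {A : Set (WithUpper P)} (hA : IrredSet A) {s : WithUpper P}
    (hs : IsLUB A s) : s ∈ closure A := by
  rw [mem_closure_iff]
  intro o ho hso
  obtain ⟨b, ⟨t, htf, rfl⟩, hzb, hbo⟩ :=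
    Topology.IsUpper.isTopologicalBasis.exists_subset_of_mem_open hso ho
  have hAnot : ¬ A ⊆ ⋃ a ∈ t, Iic a := by
    intro hcov
    obtain ⟨a, hat, ha⟩ := auxIrredSubsetIic hA t htf hcov
    have hsa : s ≤ a := hs.2 fun w hw => ha hw
    exact hzb (by rw [SetLike.mem_coe, mem_lowerClosure]; exact ⟨a, hat, hsa⟩)
  obtain ⟨x, hxA, hxn⟩ := Set.not_subset.1 hAnot
  refine ⟨x, hbo ?_, hxA⟩
  rw [Set.mem_compl_iff, SetLike.mem_coe, mem_lowerClosure]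
  push_neg
  intro a hat hle
  exact hxn (Set.mem_biUnion hat hle)

/-- A nonempty finite subfamily of a chain of sets has a least element. -/
lemma auxChainMin {α : Type*} {c : Set (Set α)} (hc : IsChain (· ⊆ ·) c) :
    ∀ u : Finset (Set α), ↑u ⊆ c → u.Nonempty → ∃ i ∈ u, ∀ j ∈ u, i ⊆ j := by
  haveI : DecidableEq (Set α) := Classical.decEq _
  intro u
  induction u using Finset.induction_on with
  | empty => intro _ h; simp at h
  | @insert a v hav ih =>
    intro hsub _
    have hac : a ∈ c := hsub (Finset.mem_insert_self _ _)
    rcases v.eq_empty_or_nonempty with rfl | hv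
    · exact ⟨a, Finset.mem_insert_self _ _, by simp⟩
    · obtain ⟨i, hiv, hi⟩ := ih (fun x hx => hsub (Finset.mem_insert_of_mem hx)) hv
      have hic : i ∈ c := hsub (Finset.mem_insert_of_mem hiv)
      rcases eq_or_ne a i with rfl | hne
      · exact ⟨a, Finset.mem_insert_self _ _, by
          intro j hj
          rcases Finset.mem_insert.1 hj with rfl | hjv
          · exact subset_rfl
          · exact hi j hjv⟩
      · rcases hc hac hic hne with hai | hia
        · exact ⟨a, Finset.mem_insert_self _ _, by
            intro j hj
            rcases Finset.mem_insert.1 hj with rfl | hjv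
            · exact subset_rfl
            · exact hai.trans (hi j hjv)⟩
        · exact ⟨i, Finset.mem_insert_of_mem hiv, by
            intro j hj
            rcases Finset.mem_insert.1 hj with rfl | hjv
            · exact hia
            · exact hi j hjv⟩

end Aux

/-- For a sup-complete poset `P`, the space `(P, υ(P))` is strongly
well-filtered. -/
theorem upper_stronglyWellFiltered_of_supComplete {P : Type*} [PartialOrder P]
    (hsup : ∀ A : Set P, A.Nonempty → ∃ s, IsLUB A s)
    {D : Type*} [Nonempty D] (Kd : D → Set (WithUpper P))
    (hne : ∀ d, (Kd d).Nonempty) (hcpt : ∀ d, IsCompact (Kd d))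
    (hsat : ∀ d, IsSaturatedSet (Kd d))
    (hfil : ∀ d₁ d₂ : D, ∃ d₃ : D, Kd d₃ ⊆ Kd d₁ ∩ Kd d₂)
    (K : Set (WithUpper P)) (hKne : K.Nonempty) (hK : IsCompact K)
    (hKsat : IsSaturatedSet K)
    (U : Set (WithUpper P)) (hU : IsOpen U) (hsub : (⋂ d, Kd d) ∩ K ⊆ U) :
    ∃ d, Kd d ∩ K ⊆ U := by
  classical
  by_contra hcon
  push_neg at hcon
  set C : Set (WithUpper P) := Uᶜ with hC
  have hCclosed : IsClosed C := hU.isClosed_compl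
  have hKu : IsUpperSet K := auxUpperOfSat hKsat
  have hKdu : ∀ d, IsUpperSet (Kd d) := fun d => auxUpperOfSat (hsat d)
  -- the "obstruction" sets
  set E : D → Set (WithUpper P) := fun d => Kd d ∩ K ∩ C with hE
  have hEne : ∀ d, (E d).Nonempty := by
    intro d
    obtain ⟨x, hx, hxU⟩ := Set.not_subset.1 (hcon d)
    exact ⟨x, hx, hxU⟩
  have hEcpt : ∀ d, IsCompact (E d) :=
    fun d => (auxCompactInter hsup (hcpt d) hK (hKdu d) hKu).inter_right hCclosed
  -- Zorn: a minimal closed set meeting each `E d`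
  set S : Set (Set (WithUpper P)) :=
    {A | IsClosed A ∧ ∀ d, (A ∩ E d).Nonempty} with hS
  have hzorn : ∃ m, Minimal (· ∈ S) m := by
    apply zorn_superset
    intro c hcS hchain
    rcases c.eq_empty_or_nonempty with rfl | hcne
    · exact ⟨Set.univ, ⟨isClosed_univ, fun d => by simpa using hEne d⟩, by simp⟩
    · refine ⟨⋂₀ c, ⟨isClosed_sInter fun A hA => (hcS hA).1, fun d => ?_⟩,
        fun A hA => Set.sInter_subset_of_mem hA⟩
      have : (E d ∩ ⋂ A : c, (A : Set (WithUpper P))).Nonempty := by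
        apply (hEcpt d).inter_iInter_nonempty
        · exact fun A => (hcS A.2).1
        · intro u
          rcases u.eq_empty_or_nonempty with rfl | hu
          · simpa using hEne d
          · obtain ⟨i, hiu, hmin⟩ := auxChainMin hchain (u.image Subtype.val)
              (by
                intro x hx
                obtain ⟨A, _, rfl⟩ := Finset.mem_image.1 hx
                exact A.2)
              (hu.image _)
            obtain ⟨A, hAu, rfl⟩ := Finset.mem_image.1 hiu
            obtain ⟨x, hxA, hxE⟩ := (hcS A.2).2 d
            refine ⟨x, hxE, ?_⟩
            simp only [Set.mem_iInter]
            intro B hBu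
            exact hmin _ (Finset.mem_image_of_mem _ hBu) hxA
      obtain ⟨x, hxE, hx⟩ := this
      refine ⟨x, ?_, hxE⟩
      rw [Set.mem_sInter]
      intro A hAc
      exact (Set.mem_iInter.1 hx) ⟨A, hAc⟩
  obtain ⟨A, hAS, hAmin⟩ := hzorn
  obtain ⟨hAclosed, hAmeets⟩ := hAS
  have hAne : A.Nonempty := by
    obtain ⟨d⟩ := ‹Nonempty D›
    obtain ⟨x, hx, _⟩ := hAmeets d
    exact ⟨x, hx⟩
  -- A ⊆ C
  have hAC : A ⊆ C := by
    have hmem : A ∩ C ∈ S := by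
      refine ⟨hAclosed.inter hCclosed, fun d => ?_⟩
      obtain ⟨x, hxA, hxE⟩ := hAmeets d
      exact ⟨x, ⟨⟨hxA, hxE.2⟩, hxE⟩⟩
    have := hAmin hmem Set.inter_subset_left
    exact fun x hx => ((this hx).2 : x ∈ C)
  -- A is irreducible
  have hAirr : IrredSet A := by
    refine ⟨hAne, fun F₁ F₂ hF₁ hF₂ hcover => ?_⟩
    by_contra hnot
    push_neg at hnot
    obtain ⟨hn1, hn2⟩ := hnot
    have h1 : A ∩ F₁ ∉ S := by
      intro hmem
      exact hn1 fun x hx => ((hAmin hmem Set.inter_subset_left) hx).2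
    have h2 : A ∩ F₂ ∉ S := by
      intro hmem
      exact hn2 fun x hx => ((hAmin hmem Set.inter_subset_left) hx).2
    simp only [hS, Set.mem_setOf_eq, not_and, not_forall] at h1 h2
    obtain ⟨d₁, hd₁⟩ := h1 (hAclosed.inter hF₁)
    obtain ⟨d₂, hd₂⟩ := h2 (hAclosed.inter hF₂)
    rw [Set.not_nonempty_iff_eq_empty] at hd₁ hd₂
    obtain ⟨d₃, hd₃⟩ := hfil d₁ d₂
    obtain ⟨x, hxA, hxE⟩ := hAmeets d₃
    have hxE1 : x ∈ E d₁ := ⟨⟨(hd₃ hxE.1.1).1, hxE.1.2⟩, hxE.2⟩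
    have hxE2 : x ∈ E d₂ := ⟨⟨(hd₃ hxE.1.1).2, hxE.1.2⟩, hxE.2⟩
    rcases hcover hxA with hx1 | hx2
    · exact Set.eq_empty_iff_forall_notMem.1 hd₁ x ⟨⟨hxA, hx1⟩, hxE1⟩
    · exact Set.eq_empty_iff_forall_notMem.1 hd₂ x ⟨⟨hxA, hx2⟩, hxE2⟩
  -- take the supremum of A
  obtain ⟨s, hs⟩ := auxExistsLUB hsup A hAne
  have hsA : s ∈ A := by
    have := auxLubMemClosure hAirr hs
    rwa [hAclosed.closure_eq] at this
  have hsC : s ∈ C := hAC hsA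
  have hsK : s ∈ K := by
    obtain ⟨d⟩ := ‹Nonempty D›
    obtain ⟨x, hxA, hxE⟩ := hAmeets d
    exact hKu (hs.1 hxA) hxE.1.2
  have hsKd : ∀ d, s ∈ Kd d := by
    intro d
    obtain ⟨x, hxA, hxE⟩ := hAmeets d
    exact (hKdu d) (hs.1 hxA) hxE.1.1
  exact hsC (hsub ⟨Set.mem_iInter.2 hsKd, hsK⟩)
end

section
/- Let P = {b_n : n ∈ ℕ⁺} ∪ {⊥₁, ⊥₂} be the poset with b_{n+1} < b_n for all n, ⊥₁ < b_n and ⊥₂ < b_n for all n, and ⊥₁, ⊥₂ incomparable. Then in the upper topology υ(P), the set {b_n : n ∈ ℕ⁺} = ↑⊥₁ ∩ ↑⊥₂ is not compact; in particular (P, υ(P)) is not coherent, even though ↑⊥₁ and ↑⊥₂ are compact saturated. -/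
open Topology

/-- The poset `P = {b_n : n ∈ ℕ⁺} ∪ {⊥₁, ⊥₂}` (`b 0, b 1, ...` is the descending
chain `b₁ > b₂ > ...`). -/
inductive Pex where
  | b : ℕ → Pex
  | bot1 : Pex
  | bot2 : Pex

/-- The order: `b_{n+1} < b_n`, `⊥₁ < b_n`, `⊥₂ < b_n`, `⊥₁` and `⊥₂`
incomparable. -/
def Pex.le : Pex → Pex → Prop
  | .b n, .b m => m ≤ n
  | .bot1, .bot1 => True
  | .bot2, .bot2 => True
  | .bot1, .b _ => True
  | .bot2, .b _ => True
  | _, _ => False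

instance : PartialOrder Pex where
  le := Pex.le
  le_refl a := by cases a <;> simp [Pex.le]
  le_trans a b c hab hbc := by
    cases a <;> cases b <;> cases c <;> simp_all [Pex.le] <;> omega
  le_antisymm a b hab hba := by
    cases a <;> cases b <;> simp_all [Pex.le] <;> omega

lemma compact_Ici_upper {α : Type*} [Preorder α] (x : WithUpper α) :
    IsCompact (Set.Ici x) := by
  refine isCompact_of_finite_subcover fun {ι} U hU hcov => ?_
  obtain ⟨i, hi⟩ := Set.mem_iUnion.mp (hcov Set.self_mem_Ici)
  refine ⟨{i}, fun y hy => Set.mem_iUnion₂.mpr ⟨i, Finset.mem_singleton_self i, ?_⟩⟩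
  exact Topology.IsUpper.isUpperSet_of_isOpen (hU i) hy hi

lemma sat_Ici_upper {α : Type*} [Preorder α] (x : WithUpper α) :
    IsSaturatedSet (Set.Ici x) := by
  apply subset_antisymm
  · intro y hy
    exact fun U hU => hU.2 hy
  · intro y hy
    by_contra hxy
    have h1 : IsOpen ((Set.Iic y)ᶜ : Set (WithUpper α)) := isClosed_Iic.isOpen_compl
    have h2 : Set.Ici x ⊆ (Set.Iic y)ᶜ := by
      intro z hz hzy
      exact hxy (le_trans hz hzy)
    exact (hy _ ⟨h1, h2⟩) le_rfl

/-- In `(P, υ(P))`, the sets `↑⊥₁` and `↑⊥₂` are compact saturated,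
their intersection is `{b_n : n ∈ ℕ⁺}`, which is not compact; in particular
`(P, υ(P))` is not coherent. -/
theorem upper_Pex_not_coherent :
    IsCompact (Set.Ici (WithUpper.toUpper Pex.bot1)) ∧
    IsSaturatedSet (Set.Ici (WithUpper.toUpper Pex.bot1)) ∧
    IsCompact (Set.Ici (WithUpper.toUpper Pex.bot2)) ∧
    IsSaturatedSet (Set.Ici (WithUpper.toUpper Pex.bot2)) ∧
    Set.Ici (WithUpper.toUpper Pex.bot1) ∩ Set.Ici (WithUpper.toUpper Pex.bot2) =
      {x : WithUpper Pex | ∃ n : ℕ, x = WithUpper.toUpper (Pex.b n)} ∧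
    ¬ IsCompact {x : WithUpper Pex | ∃ n : ℕ, x = WithUpper.toUpper (Pex.b n)} := by
  refine ⟨compact_Ici_upper _, sat_Ici_upper _, compact_Ici_upper _, sat_Ici_upper _, ?_, ?_⟩
  · ext x
    induction x with | toUpper a =>
    simp only [Set.mem_inter_iff, Set.mem_Ici, Set.mem_setOf_eq]
    cases a with
    | b n => exact ⟨fun _ => ⟨n, rfl⟩, fun _ => ⟨trivial, trivial⟩⟩
    | bot1 =>
      refine ⟨fun h => (h.2 : False).elim, fun ⟨n, hn⟩ => ?_⟩
      exact Pex.noConfusion (show Pex.bot1 = Pex.b n from hn)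
    | bot2 =>
      refine ⟨fun h => (h.1 : False).elim, fun ⟨n, hn⟩ => ?_⟩
      exact Pex.noConfusion (show Pex.bot2 = Pex.b n from hn)
  · intro hc
    have hcov : {x : WithUpper Pex | ∃ n : ℕ, x = WithUpper.toUpper (Pex.b n)} ⊆
        ⋃ n : ℕ, (Set.Iic (WithUpper.toUpper (Pex.b n)))ᶜ := by
      rintro x ⟨n, rfl⟩
      refine Set.mem_iUnion.mpr ⟨n + 1, ?_⟩
      simp only [Set.mem_compl_iff, Set.mem_Iic]
      intro h
      have : (n + 1 : ℕ) ≤ n := h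
      omega
    obtain ⟨t, ht⟩ := hc.elim_finite_subcover _
      (fun n => (isClosed_Iic (a := WithUpper.toUpper (Pex.b n))).isOpen_compl) hcov
    set N := t.sup id
    have hmem : WithUpper.toUpper (Pex.b N) ∈
        {x : WithUpper Pex | ∃ n : ℕ, x = WithUpper.toUpper (Pex.b n)} := ⟨N, rfl⟩
    obtain ⟨n, hn⟩ := Set.mem_iUnion.mp (ht hmem)
    simp only [Set.mem_iUnion, Set.mem_compl_iff, Set.mem_Iic] at hn
    obtain ⟨hnt, hle⟩ := hn
    exact hle (show (n : ℕ) ≤ N from Finset.le_sup (f := id) hnt)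
end
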